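/- Let d ≥ 2, let D ∈ ℂ[t] be squarefree of degree 2d, and let (A,B) be a solution of the Pell–Abel equation for D. Then the set of finite branch points of A² other than 0 and 1, namely { A(z)² : z ∈ ℂ and the derivative of the polynomial A² vanishes at z } \ {0, 1}, has cardinality at most d − 1. -/
import Mathlib

open Polynomial

theorem stmt3 (d : ℕ) (hd : 2 ≤ d) (D A B : Polynomial ℂ)
    (hD : Squarefree D) (hdeg : D.natDegree = 2*d)
    (hB : B ≠ 0) (hPell : A ^ 2 - D * B ^ 2 = 1) :
    ({w : ℂ | ∃ z : ℂ, (Polynomial.derivative (A ^ 2)).eval z = 0 ∧ w = (A.eval z) ^ 2}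
        \ {0, 1}).Finite ∧
    ({w : ℂ | ∃ z : ℂ, (Polynomial.derivative (A ^ 2)).eval z = 0 ∧ w = (A.eval z) ^ 2}
        \ {0, 1}).ncard ≤ d - 1 := by
  have hD0 : D ≠ 0 := hD.ne_zero
  have hA2 : A ^ 2 = 1 + D * B ^ 2 := by linear_combination hPell
  set m := B.natDegree with hm
  have hdegDB : (D * B ^ 2).natDegree = 2*d + 2*m := by
    rw [Polynomial.natDegree_mul hD0 (pow_ne_zero 2 hB), Polynomial.natDegree_pow, hdeg]
  have hA2deg : (A ^ 2).natDegree = 2*d + 2*m := by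
    rw [hA2, Polynomial.natDegree_add_eq_right_of_natDegree_lt, hdegDB]
    rw [hdegDB, Polynomial.natDegree_one]; omega
  have hAdeg : A.natDegree = d + m := by
    have := Polynomial.natDegree_pow A 2
    omega
  have hA0 : A ≠ 0 := by
    intro h; rw [h] at hAdeg; simp [Polynomial.natDegree_zero] at hAdeg; omega
  have hA'0 : Polynomial.derivative A ≠ 0 := by
    intro h
    have := Polynomial.natDegree_eq_zero_of_derivative_eq_zero h
    omega
  have hcop : IsCoprime A B := ⟨A, -(D*B), by linear_combination hPell⟩
  have hder : Polynomial.derivative (A ^ 2) = 2 * A * Polynomial.derivative A := by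
    rw [sq, Polynomial.derivative_mul]; ring
  have key : A * (2 * Polynomial.derivative A)
      = B * (Polynomial.derivative D * B + 2 * D * Polynomial.derivative B) := by
    have h := congrArg Polynomial.derivative hA2
    rw [hder, Polynomial.derivative_add, Polynomial.derivative_one, Polynomial.derivative_mul,
      sq, Polynomial.derivative_mul] at h
    linear_combination h
  have hdvd : B ∣ 2 * Polynomial.derivative A :=
    hcop.symm.dvd_of_dvd_mul_left ⟨_, key⟩
  obtain ⟨C, hC⟩ := hdvd
  have hC0 : C ≠ 0 := by
    intro h; rw [h, mul_zero] at hC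
    have : (2 : Polynomial ℂ) ≠ 0 := two_ne_zero
    exact hA'0 (by simpa [this] using hC)
  have hCdeg : C.natDegree ≤ d - 1 := by
    have h1 : (2 * Polynomial.derivative A).natDegree = (Polynomial.derivative A).natDegree := by
      rw [Polynomial.natDegree_mul two_ne_zero hA'0]
      simp
    have h2 : (B * C).natDegree = m + C.natDegree := Polynomial.natDegree_mul hB hC0
    have h3 : (Polynomial.derivative A).natDegree ≤ A.natDegree - 1 :=
      Polynomial.natDegree_derivative_le A
    rw [hC, h2] at h1
    omega
  set Z : Set ℂ := {z | C.eval z = 0} with hZ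
  have hZeq : Z = ↑C.roots.toFinset := by
    ext z; simp [hZ, Polynomial.mem_roots, hC0, Polynomial.IsRoot]
  have hZfin : Z.Finite := by rw [hZeq]; exact (C.roots.toFinset : Finset ℂ).finite_toSet
  have hZcard : Z.ncard ≤ C.natDegree := by
    rw [hZeq, Set.ncard_coe_finset]
    exact le_trans (Multiset.toFinset_card_le _) (Polynomial.card_roots' C)
  have hsub : ({w : ℂ | ∃ z : ℂ, (Polynomial.derivative (A ^ 2)).eval z = 0 ∧ w = (A.eval z) ^ 2}
      \ {0, 1}) ⊆ (fun z => (A.eval z) ^ 2) '' Z := by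
    rintro w ⟨⟨z, hz1, hz2⟩, hw⟩
    simp only [Set.mem_insert_iff, Set.mem_singleton_iff, not_or] at hw
    obtain ⟨hw0, hw1⟩ := hw
    have hAz : A.eval z ≠ 0 := by
      intro h; apply hw0; rw [hz2, h]; ring
    have hA'z : (Polynomial.derivative A).eval z = 0 := by
      rw [hder] at hz1
      simp only [Polynomial.eval_mul, Polynomial.eval_ofNat] at hz1
      rcases mul_eq_zero.mp hz1 with h | h
      · rcases mul_eq_zero.mp h with h' | h'
        · norm_num at h'
        · exact absurd h' hAz
      · exact h
    have hBz : B.eval z ≠ 0 := by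
      intro h
      apply hw1
      have := congrArg (Polynomial.eval z) hA2
      simp only [Polynomial.eval_pow, Polynomial.eval_add, Polynomial.eval_one,
        Polynomial.eval_mul, h] at this
      rw [hz2]; rw [this]; ring
    have hCz : C.eval z = 0 := by
      have := congrArg (Polynomial.eval z) hC
      simp only [Polynomial.eval_mul, Polynomial.eval_ofNat, hA'z, mul_zero] at this
      rcases mul_eq_zero.mp this.symm with h | h
      · exact absurd h hBz
      · exact h
    exact ⟨z, hCz, hz2.symm⟩
  constructor
  · exact (hZfin.image _).subset hsub
  · calc ({w : ℂ | ∃ z : ℂ, (Polynomial.derivative (A ^ 2)).eval z = 0 ∧ w = (A.eval z) ^ 2}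
        \ {0, 1}).ncard ≤ ((fun z => (A.eval z) ^ 2) '' Z).ncard :=
          Set.ncard_le_ncard hsub (hZfin.image _)
      _ ≤ Z.ncard := Set.ncard_image_le hZfin
      _ ≤ C.natDegree := hZcard
      _ ≤ d - 1 := hCdeg
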